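/- The hierarchical altruism equation φ(χ) = 2χ(1 − Φ(χ)) has exactly one real solution χ*; moreover χ* is positive and lies in the open interval (0, √3). -/

import Mathlib

open MeasureTheory

/-- The standard normal probability density function. -/
noncomputable def stdGaussianPDF (x : ℝ) : ℝ :=
  Real.exp (-x ^ 2 / 2) / Real.sqrt (2 * Real.pi)

/-- The standard normal cumulative distribution function. -/
noncomputable def stdGaussianCDF (x : ℝ) : ℝ :=
  ∫ t in Set.Iic x, stdGaussianPDF t

open Real Filter Set

lemma pdf_pos (x : ℝ) : 0 < stdGaussianPDF x := by
  unfold stdGaussianPDF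
  positivity

lemma pdf_cont : Continuous stdGaussianPDF := by
  unfold stdGaussianPDF
  fun_prop

lemma pdf_eq (x : ℝ) : stdGaussianPDF x = Real.exp (-(1/2) * x ^ 2) / Real.sqrt (2 * Real.pi) := by
  unfold stdGaussianPDF; ring_nf

lemma pdf_integrable : Integrable stdGaussianPDF := by
  have h := (integrable_exp_neg_mul_sq (b := 1/2) (by norm_num)).div_const (Real.sqrt (2 * Real.pi))
  convert h using 2 with x
  rw [pdf_eq]

lemma pdf_integral : ∫ x, stdGaussianPDF x = 1 := by
  have : ∫ x, stdGaussianPDF x = (∫ x, Real.exp (-(1/2) * x ^ 2)) / Real.sqrt (2 * Real.pi) := by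
    rw [← MeasureTheory.integral_div]
    congr 1 with x; rw [pdf_eq]
  rw [this, integral_gaussian]
  rw [show (Real.pi / (1/2)) = 2 * Real.pi by ring]
  rw [div_self (by positivity)]

lemma hasDerivAt_pdf (x : ℝ) : HasDerivAt stdGaussianPDF (-x * stdGaussianPDF x) x := by
  have h1 : HasDerivAt (fun x : ℝ => -x ^ 2 / 2) (-x) x := by
    have := ((hasDerivAt_pow 2 x).neg).div_const 2
    refine this.congr_deriv ?_
    simp; ring
  have h2 := (h1.exp).div_const (Real.sqrt (2 * Real.pi))
  refine h2.congr_deriv ?_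
  unfold stdGaussianPDF; ring

lemma cdf_sub (a b : ℝ) :
    stdGaussianCDF b - stdGaussianCDF a = ∫ t in a..b, stdGaussianPDF t := by
  unfold stdGaussianCDF
  rw [intervalIntegral.integral_Iic_sub_Iic pdf_integrable.integrableOn
    pdf_integrable.integrableOn]

lemma hasDerivAt_cdf (x : ℝ) : HasDerivAt stdGaussianCDF (stdGaussianPDF x) x := by
  have h : HasDerivAt (fun u => ∫ t in (0:ℝ)..u, stdGaussianPDF t) (stdGaussianPDF x) x :=
    intervalIntegral.integral_hasDerivAt_right
      (pdf_integrable.intervalIntegrable)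
      (pdf_cont.aestronglyMeasurable.stronglyMeasurableAtFilter)
      pdf_cont.continuousAt
  have heq : ∀ u, stdGaussianCDF u = (∫ t in (0:ℝ)..u, stdGaussianPDF t) + stdGaussianCDF 0 := by
    intro u
    have := cdf_sub 0 u
    linarith
  have := h.add_const (stdGaussianCDF 0)
  exact this.congr_deriv rfl |>.congr_of_eventuallyEq (by filter_upwards with u using (heq u))
  
lemma cdf_tendsto : Tendsto stdGaussianCDF atTop (nhds 1) := by
  have h := (MeasureTheory.aecover_Iic (μ := (volume : Measure ℝ)) tendsto_id
    ).integral_tendsto_of_countably_generated pdf_integrable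
  rw [pdf_integral] at h
  exact h

lemma cdf_strictMono : StrictMono stdGaussianCDF :=
  strictMono_of_hasDerivAt_pos hasDerivAt_cdf pdf_pos

lemma cdf_lt_one (x : ℝ) : stdGaussianCDF x < 1 := by
  have h1 : stdGaussianCDF (x + 1) ≤ 1 :=
    cdf_strictMono.monotone.ge_of_tendsto cdf_tendsto (x + 1)
  have := cdf_strictMono (show x < x + 1 by linarith)
  linarith

lemma pdf_tendsto_zero : Tendsto stdGaussianPDF atTop (nhds 0) := by
  have h1 : Tendsto (fun x : ℝ => -x ^ 2 / 2) atTop atBot := by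
    apply Filter.Tendsto.atBot_div_const (by norm_num)
    exact tendsto_neg_atBot_iff.mpr (tendsto_pow_atTop (by norm_num))
  have := (Real.tendsto_exp_atBot.comp h1).div_const (Real.sqrt (2 * Real.pi))
  unfold stdGaussianPDF
  simpa only [Function.comp, zero_div] using this

noncomputable def millsAux (x : ℝ) : ℝ :=
  x * stdGaussianPDF x / (1 + x ^ 2) - (1 - stdGaussianCDF x)

lemma hasDerivAt_millsAux (x : ℝ) :
    HasDerivAt millsAux (2 * stdGaussianPDF x / (1 + x ^ 2) ^ 2) x := by
  have hnum : HasDerivAt (fun x : ℝ => x * stdGaussianPDF x)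
      (1 * stdGaussianPDF x + x * (-x * stdGaussianPDF x)) x :=
    (hasDerivAt_id x).mul (hasDerivAt_pdf x)
  have hden : HasDerivAt (fun x : ℝ => 1 + x ^ 2) (2 * x) x := by
    have := (hasDerivAt_pow 2 x).const_add 1
    simpa using this
  have hv : (1 + x ^ 2) ≠ 0 := by positivity
  have hq := hnum.div hden hv
  have hs : HasDerivAt (fun x : ℝ => 1 - stdGaussianCDF x) (-stdGaussianPDF x) x := by
    simpa using (hasDerivAt_cdf x).const_sub 1
  have := hq.sub hs
  refine this.congr_deriv ?_
  field_simp
  ring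

lemma millsAux_tendsto : Tendsto millsAux atTop (nhds 0) := by
  have h1 : Tendsto (fun x : ℝ => x * stdGaussianPDF x / (1 + x ^ 2)) atTop (nhds 0) := by
    refine squeeze_zero_norm' ?_ pdf_tendsto_zero
    · filter_upwards [eventually_ge_atTop (0:ℝ)] with x hx
      have hp := (pdf_pos x).le
      have h2 : x * stdGaussianPDF x / (1 + x ^ 2) = stdGaussianPDF x * (x / (1 + x ^ 2)) := by
        ring
      rw [Real.norm_eq_abs, abs_of_nonneg (by positivity), h2]
      have h3 : x / (1 + x ^ 2) ≤ 1 := by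
        rw [div_le_one (by positivity)]
        nlinarith
      nlinarith [pdf_pos x, div_nonneg hx (by positivity : (0:ℝ) ≤ 1 + x ^ 2)]
  have h2 : Tendsto (fun x : ℝ => 1 - stdGaussianCDF x) atTop (nhds 0) := by
    have := cdf_tendsto.const_sub 1
    simpa using this
  have := h1.sub h2
  unfold millsAux
  simpa using this

lemma millsAux_neg (x : ℝ) : millsAux x < 0 := by
  have hm : StrictMono millsAux :=
    strictMono_of_hasDerivAt_pos hasDerivAt_millsAux (fun x => by have := pdf_pos x; positivity)
  have h1 : millsAux (x + 1) ≤ 0 :=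
    hm.monotone.ge_of_tendsto millsAux_tendsto (x + 1)
  have := hm (show x < x + 1 by linarith)
  linarith

lemma mills (x : ℝ) : x * stdGaussianPDF x < (1 + x ^ 2) * (1 - stdGaussianCDF x) := by
  have h := millsAux_neg x
  unfold millsAux at h
  rw [sub_neg, div_lt_iff₀ (by positivity : (0:ℝ) < 1 + x ^ 2)] at h
  linarith

noncomputable def Gfun (x : ℝ) : ℝ := x * (1 - stdGaussianCDF x) / stdGaussianPDF x

lemma hasDerivAt_Gfun (x : ℝ) :
    HasDerivAt Gfun
      (((1 + x ^ 2) * (1 - stdGaussianCDF x) - x * stdGaussianPDF x) / stdGaussianPDF x) x := by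
  have hs : HasDerivAt (fun x : ℝ => 1 - stdGaussianCDF x) (-stdGaussianPDF x) x := by
    simpa using (hasDerivAt_cdf x).const_sub 1
  have hnum : HasDerivAt (fun x : ℝ => x * (1 - stdGaussianCDF x))
      (1 * (1 - stdGaussianCDF x) + x * (-stdGaussianPDF x)) x :=
    (hasDerivAt_id x).mul hs
  have hq := hnum.div (hasDerivAt_pdf x) (pdf_pos x).ne'
  refine hq.congr_deriv ?_
  have hp := (pdf_pos x).ne'
  field_simp
  ring

lemma Gfun_strictMono : StrictMono Gfun := by
  apply strictMono_of_hasDerivAt_pos hasDerivAt_Gfun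
  intro x
  exact div_pos (by linarith [mills x]) (pdf_pos x)

lemma Gfun_cont : Continuous Gfun :=
  continuous_iff_continuousAt.mpr fun x => (hasDerivAt_Gfun x).differentiableAt.continuousAt

lemma cdf_pos_facts (x : ℝ) : 0 < 1 - stdGaussianCDF x := by
  linarith [cdf_lt_one x]

/-- The hierarchical altruism equation `φ(χ) = 2χ(1 − Φ(χ))` has exactly one real
solution `χ*`; moreover `χ*` is positive and lies in the open interval `(0, √3)`. -/
theorem hierarchical_altruism_equation_unique_solution :
    ∃ χs : ℝ, stdGaussianPDF χs = 2 * χs * (1 - stdGaussianCDF χs) ∧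
      0 < χs ∧ χs < Real.sqrt 3 ∧
      ∀ χ : ℝ, stdGaussianPDF χ = 2 * χ * (1 - stdGaussianCDF χ) → χ = χs := by
  have hG0 : Gfun 0 = 0 := by simp [Gfun]
  have hG32 : 1 / 2 < Gfun (3/2 : ℝ) := by
    have hm := mills (3/2 : ℝ)
    have hp := pdf_pos (3/2 : ℝ)
    rw [Gfun, lt_div_iff₀ hp]
    nlinarith [cdf_pos_facts (3/2 : ℝ)]
  have hmem : (1/2 : ℝ) ∈ Set.Ioo (Gfun 0) (Gfun (3/2)) := by
    constructor <;> [rw [hG0]; skip] <;> norm_num [hG32]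
  obtain ⟨χs, hχsmem, hGχs⟩ :=
    intermediate_value_Ioo (by norm_num : (0:ℝ) ≤ 3/2) Gfun_cont.continuousOn hmem
  obtain ⟨hχs0, hχs32⟩ := hχsmem
  have hp := pdf_pos χs
  have h1Φ := cdf_pos_facts χs
  have heq : stdGaussianPDF χs = 2 * χs * (1 - stdGaussianCDF χs) := by
    rw [Gfun, div_eq_iff hp.ne'] at hGχs
    linarith
  refine ⟨χs, heq, hχs0, ?_, ?_⟩
  · have h32 : (3/2 : ℝ) < Real.sqrt 3 := by
      rw [show (3/2 : ℝ) = Real.sqrt ((3/2)^2) by rw [Real.sqrt_sq (by norm_num)]]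
      exact Real.sqrt_lt_sqrt (by positivity) (by norm_num)
    linarith
  · intro χ hχ
    rcases le_or_gt χ 0 with hle | hgt
    · exfalso
      have := pdf_pos χ
      nlinarith [cdf_pos_facts χ]
    · apply Gfun_strictMono.injective
      rw [hGχs, Gfun, hχ]
      have := cdf_pos_facts χ
      field_simp
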